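/- Let h > 0, V > 0, and let v : [0,h] → ℝ be measurable with |v(t)| ≤ V for all t. Define the moments μ₀ = (1/h)∫₀ʰ v(t) dt and μ₁ = (4/h²)∫₀ʰ (t − h/2)·v(t) dt. Then |μ₀| ≤ V and |μ₁| ≤ (1 − μ₀²/V²)·V. -/

import Mathlib

open MeasureTheory Set

lemma abs_int (h s : ℝ) (hs0 : 0 ≤ s) (hsh : s ≤ h) :
    ∫ t in (0:ℝ)..h, |t - s| = s^2/2 + (h - s)^2/2 := by
  have i1 : IntervalIntegrable (fun t => |t - s|) volume 0 s :=
    (continuous_abs.comp (continuous_id.sub continuous_const)).intervalIntegrable _ _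
  have i2 : IntervalIntegrable (fun t => |t - s|) volume s h :=
    (continuous_abs.comp (continuous_id.sub continuous_const)).intervalIntegrable _ _
  rw [← intervalIntegral.integral_add_adjacent_intervals i1 i2]
  have e1 : (∫ t in (0:ℝ)..s, |t - s|) = ∫ t in (0:ℝ)..s, (s - t) := by
    apply intervalIntegral.integral_congr
    intro t ht
    rw [uIcc_of_le hs0] at ht
    show |t - s| = s - t
    rw [abs_of_nonpos (by linarith [ht.2])]; ring
  have e2 : (∫ t in s..h, |t - s|) = ∫ t in s..h, (t - s) := by
    apply intervalIntegral.integral_congr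
    intro t ht
    rw [uIcc_of_le hsh] at ht
    show |t - s| = t - s
    rw [abs_of_nonneg (by linarith [ht.1])]
  rw [e1, e2]
  have c1 : (∫ t in (0:ℝ)..s, (s - t)) = s^2/2 := by
    rw [intervalIntegral.integral_sub (intervalIntegrable_const) (intervalIntegral.intervalIntegrable_id),
      intervalIntegral.integral_const, integral_id]
    simp; ring
  have c2 : (∫ t in s..h, (t - s)) = (h - s)^2/2 := by
    rw [intervalIntegral.integral_sub (intervalIntegral.intervalIntegrable_id) (intervalIntegrable_const),
      intervalIntegral.integral_const, integral_id]
    simp [smul_eq_mul]; ring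
  rw [c1, c2]

lemma aux_upper (h V : ℝ) (hh : 0 < h) (hV : 0 < V)
    (v : ℝ → ℝ) (hv : Measurable v)
    (hbound : ∀ t ∈ Icc (0 : ℝ) h, |v t| ≤ V) :
    (∫ t in (0:ℝ)..h, (t - h/2) * v t) ≤
      V*h^2/4 - (∫ t in (0:ℝ)..h, v t)^2/(4*V) := by
  set m := ∫ t in (0:ℝ)..h, v t with hm_def
  -- integrability of v
  have hvi : IntervalIntegrable v volume 0 h := by
    rw [intervalIntegrable_iff_integrableOn_Icc_of_le hh.le]
    apply Measure.integrableOn_of_bounded (M := V) measure_Icc_lt_top.ne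
      hv.aestronglyMeasurable
    filter_upwards [ae_restrict_mem measurableSet_Icc] with t ht
    simpa using hbound t ht
  -- |m| ≤ V * h
  have hm : |m| ≤ V * h := by
    have := intervalIntegral.norm_integral_le_of_norm_le_const (C := V)
      (f := v) (a := (0:ℝ)) (b := h) ?_
    · simpa [abs_of_pos hh] using this
    · intro x hx
      rw [uIoc_of_le hh.le] at hx
      simpa using hbound x ⟨hx.1.le, hx.2⟩
  have hm1 : m ≤ V * h := (abs_le.mp hm).2
  have hm2 : -(V * h) ≤ m := (abs_le.mp hm).1
  set s := (V*h - m)/(2*V) with hs_def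
  have hs0 : 0 ≤ s := div_nonneg (by linarith) (by linarith)
  have hsh : s ≤ h := by
    rw [hs_def, div_le_iff₀ (by linarith)]
    linarith
  -- pointwise bound
  have hpt : ∀ t ∈ Icc (0:ℝ) h,
      (t - h/2) * v t ≤ (s - h/2) * v t + V * |t - s| := by
    intro t ht
    have h1 : (t - s) * v t ≤ |t - s| * |v t| := by
      calc (t - s) * v t ≤ |(t - s) * v t| := le_abs_self _
        _ = |t - s| * |v t| := abs_mul _ _
    have h2 : |t - s| * |v t| ≤ |t - s| * V :=
      mul_le_mul_of_nonneg_left (hbound t ht) (abs_nonneg _)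
    nlinarith [h1, h2]
  -- integrability of both sides
  have hil : IntervalIntegrable (fun t => (t - h/2) * v t) volume 0 h := by
    rw [intervalIntegrable_iff_integrableOn_Icc_of_le hh.le]
    apply Measure.integrableOn_of_bounded (M := h * V) measure_Icc_lt_top.ne
      (((measurable_id.sub measurable_const).mul hv).aestronglyMeasurable)
    filter_upwards [ae_restrict_mem measurableSet_Icc] with t ht
    have h1 : |t - h/2| ≤ h := by
      rw [abs_le]; constructor <;> [linarith [ht.2, ht.1]; linarith [ht.2, ht.1]]
    have h2 := hbound t ht
    calc ‖(t - h/2) * v t‖ = |t - h/2| * |v t| := abs_mul _ _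
      _ ≤ h * V := mul_le_mul h1 h2 (abs_nonneg _) hh.le
  have hir : IntervalIntegrable (fun t => (s - h/2) * v t + V * |t - s|) volume 0 h :=
    (hvi.const_mul _).add
      ((continuous_const.mul (continuous_sub_right s).abs).intervalIntegrable _ _)
  have hmono := intervalIntegral.integral_mono_on hh.le hil hir hpt
  have hrhs : (∫ t in (0:ℝ)..h, ((s - h/2) * v t + V * |t - s|)) =
      (s - h/2) * m + V * (s^2/2 + (h - s)^2/2) := by
    rw [intervalIntegral.integral_add (g := fun t => V * |t - s|) (hvi.const_mul _)
      ((continuous_const.mul (continuous_sub_right s).abs).intervalIntegrable _ _),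
      intervalIntegral.integral_const_mul, intervalIntegral.integral_const_mul,
      abs_int h s hs0 hsh]
  rw [hrhs] at hmono
  have heq : (s - h/2) * m + V * (s^2/2 + (h - s)^2/2) = V*h^2/4 - m^2/(4*V) := by
    rw [hs_def]
    field_simp
    ring
  linarith [hmono, heq.le]

/-- For `h > 0`, `V > 0` and a measurable `v : [0,h] → ℝ` with `|v| ≤ V`,
the moments `μ₀ = (1/h)∫₀ʰ v` and `μ₁ = (4/h²)∫₀ʰ (t − h/2)·v(t) dt` satisfy
`|μ₀| ≤ V` and `|μ₁| ≤ (1 − μ₀²/V²)·V`. -/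
theorem moment_bounds
    (h V : ℝ) (hh : 0 < h) (hV : 0 < V)
    (v : ℝ → ℝ) (hv : Measurable v)
    (hbound : ∀ t ∈ Icc (0 : ℝ) h, |v t| ≤ V) :
    |(1 / h) * ∫ t in (0 : ℝ)..h, v t| ≤ V ∧
    |(4 / h ^ 2) * ∫ t in (0 : ℝ)..h, (t - h / 2) * v t| ≤
      (1 - ((1 / h) * ∫ t in (0 : ℝ)..h, v t) ^ 2 / V ^ 2) * V := by
  set m := ∫ t in (0:ℝ)..h, v t with hm_def
  have hm : |m| ≤ V * h := by
    have := intervalIntegral.norm_integral_le_of_norm_le_const (C := V)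
      (f := v) (a := (0:ℝ)) (b := h) ?_
    · simpa [abs_of_pos hh] using this
    · intro x hx
      rw [uIoc_of_le hh.le] at hx
      simpa using hbound x ⟨hx.1.le, hx.2⟩
  constructor
  · rw [abs_mul, abs_of_pos (by positivity : (0:ℝ) < 1/h)]
    rw [div_mul_eq_mul_div, one_mul, div_le_iff₀ hh]
    linarith [hm]
  · have B1 := aux_upper h V hh hV v hv hbound
    have B2 := aux_upper h V hh hV (fun t => -v t) hv.neg
      (fun t ht => by simpa using hbound t ht)
    have e1 : (∫ t in (0:ℝ)..h, (t - h/2) * (-v t)) =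
        -∫ t in (0:ℝ)..h, (t - h/2) * v t := by
      rw [← intervalIntegral.integral_neg]
      congr 1; funext t; ring
    have e2 : (∫ t in (0:ℝ)..h, -v t) = -m := by
      rw [← intervalIntegral.integral_neg]
    rw [e1, e2] at B2
    have hI : |∫ t in (0:ℝ)..h, (t - h/2) * v t| ≤ V*h^2/4 - m^2/(4*V) := by
      rw [abs_le]
      constructor
      · have : (-m)^2 = m^2 := by ring
        rw [this] at B2; linarith
      · exact B1
    rw [abs_mul, abs_of_pos (by positivity : (0:ℝ) < 4/h^2)]
    have key : (4/h^2) * |∫ t in (0:ℝ)..h, (t - h/2) * v t| ≤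
        (4/h^2) * (V*h^2/4 - m^2/(4*V)) :=
      mul_le_mul_of_nonneg_left hI (by positivity)
    have heq : (4/h^2) * (V*h^2/4 - m^2/(4*V)) =
        (1 - ((1/h) * m)^2 / V^2) * V := by
      field_simp
    linarith [key, heq.le]
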